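/- For every n ≥ 7, the order of the letter b in the automaton 𝒜_n is 6; that is, δ(q,b⁶) = q for every state q ∈ Q_n, and 6 is the least positive integer k such that δ(q,b^k) = q for all q ∈ Q_n. -/
import Mathlib


/-- The two letters of a binary alphabet. -/
inductive Letter where
  | a : Letter
  | b : Letter
deriving DecidableEq

/-- The transition function of the automaton `𝒜ₙ` on the state set
`Qₙ = {0, 1, …, n-1}` (represented inside `ℕ`):
`δ(0,a)=δ(0,b)=0`; `δ(1,a)=0`, `δ(2,a)=4`, `δ(3,a)=2`, `δ(4,a)=3`;
`δ(1,b)=3`, `δ(2,b)=1`, `δ(3,b)=2`; and for `4 ≤ j ≤ n-1`: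
`δ(j,a) = j-1` if `j ≥ 6` is even, `δ(j,a) = j+1` if `j ≥ 5` is odd and
`j ≠ n-1`, `δ(j,a) = j` if `j = n-1` is odd; `δ(j,b) = j-1` if `j ≥ 5` is odd,
`δ(j,b) = j+1` if `j ≥ 4` is even and `j ≠ n-1`, `δ(j,b) = j` if `j = n-1`
is even. -/
def anDelta (n : ℕ) (q : ℕ) (ℓ : Letter) : ℕ :=
  match q, ℓ with
  | 0, _ => 0
  | 1, Letter.a => 0
  | 1, Letter.b => 3
  | 2, Letter.a => 4
  | 2, Letter.b => 1
  | 3, _ => 2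
  | 4, Letter.a => 3
  | j, Letter.a => if j % 2 = 1 then (if j = n - 1 then j else j + 1) else j - 1
  | j, Letter.b => if j % 2 = 0 then (if j = n - 1 then j else j + 1) else j - 1

/-- Extension of the transition function of `𝒜ₙ` to words:
`δ(q, uv) = δ(δ(q, u), v)`. -/
def anStar (n : ℕ) (q : ℕ) (w : List Letter) : ℕ :=
  w.foldl (anDelta n) q

lemma deltab (n k : ℕ) : anDelta n (k+4) Letter.b
    = if (k+4) % 2 = 0 then (if k+4 = n-1 then k+4 else k+5) else k+3 := by
  cases k with
  | zero => rfl
  | succ m => rfl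

lemma deltab' (n q : ℕ) (h4 : 4 ≤ q) : anDelta n q Letter.b
    = if q % 2 = 0 then (if q = n-1 then q else q+1) else q-1 := by
  obtain ⟨k, rfl⟩ : ∃ k, q = k + 4 := ⟨q - 4, by omega⟩
  rw [deltab]
  split_ifs <;> omega

lemma bb (n q : ℕ) (h4 : 4 ≤ q) (hq : q < n) :
    anDelta n (anDelta n q Letter.b) Letter.b = q := by
  rw [deltab' n q h4]
  rcases Nat.even_or_odd q with hpar | hpar
  · have h0 : q % 2 = 0 := Nat.even_iff.mp hpar
    rw [if_pos h0]
    by_cases he : q = n - 1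
    · rw [if_pos he, deltab' n q h4, if_pos h0, if_pos he]
    · rw [if_neg he, deltab' n (q+1) (by omega)]
      have : (q+1) % 2 ≠ 0 := by omega
      rw [if_neg this]
      omega
  · have hq1 : q % 2 = 1 := Nat.odd_iff.mp hpar
    have h1 : ¬ q % 2 = 0 := by omega
    rw [if_neg h1, deltab' n (q-1) (by omega)]
    have h2 : (q-1) % 2 = 0 := by omega
    have h3 : q - 1 ≠ n - 1 := by omega
    rw [if_pos h2, if_neg h3]
    omega

lemma anStar_succ (n q m : ℕ) (l : Letter) :
    anStar n q (List.replicate (m+1) l) = anDelta n (anStar n q (List.replicate m l)) l := by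
  rw [List.replicate_succ']
  simp [anStar, List.foldl_append]

lemma state1 (n k : ℕ) : anStar n 1 (List.replicate k Letter.b)
    = if k % 3 = 0 then 1 else if k % 3 = 1 then 3 else 2 := by
  induction k with
  | zero => rfl
  | succ m ih =>
    rw [anStar_succ, ih]
    have h3 : m % 3 = 0 ∨ m % 3 = 1 ∨ m % 3 = 2 := by omega
    rcases h3 with h | h | h
    · rw [if_pos h, if_neg (by omega : ¬ (m+1) % 3 = 0), if_pos (by omega : (m+1) % 3 = 1)]
      rfl
    · rw [if_neg (by omega : ¬ m % 3 = 0), if_pos h,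
        if_neg (by omega : ¬ (m+1) % 3 = 0), if_neg (by omega : ¬ (m+1) % 3 = 1)]
      rfl
    · rw [if_neg (by omega : ¬ m % 3 = 0), if_neg (by omega : ¬ m % 3 = 1),
        if_pos (by omega : (m+1) % 3 = 0)]
      rfl

lemma state4 (n k : ℕ) (hn : 7 ≤ n) : anStar n 4 (List.replicate k Letter.b)
    = if k % 2 = 0 then 4 else 5 := by
  induction k with
  | zero => rfl
  | succ m ih =>
    rw [anStar_succ, ih]
    rcases Nat.even_or_odd m with hpar | hpar
    · have h0 : m % 2 = 0 := Nat.even_iff.mp hpar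
      rw [if_pos h0]
      have : (m+1) % 2 ≠ 0 := by omega
      rw [if_neg this]
      rw [deltab' n 4 (by norm_num), if_pos rfl, if_neg (by omega)]
    · have h0 : m % 2 ≠ 0 := by have := Nat.odd_iff.mp hpar; omega
      rw [if_neg h0]
      have : (m+1) % 2 = 0 := by omega
      rw [if_pos this]
      rw [deltab' n 5 (by norm_num)]
      norm_num

set_option maxHeartbeats 1000000 in
/-- For every `n ≥ 7`, the order of the letter `b` in the automaton `𝒜ₙ`
is `6`: `δ(q, b⁶) = q` for every state `q ∈ Qₙ`, and `6` is the least
positive integer `k` such that `δ(q, bᵏ) = q` for all `q ∈ Qₙ`. -/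
theorem an_order_of_b (n : ℕ) (hn : 7 ≤ n) :
    (∀ q : ℕ, q < n → anStar n q (List.replicate 6 Letter.b) = q) ∧
    (∀ k : ℕ, 0 < k →
      (∀ q : ℕ, q < n → anStar n q (List.replicate k Letter.b) = q) →
      6 ≤ k) := by
  constructor
  · intro q hq
    by_cases h4 : 4 ≤ q
    · have e : List.replicate 6 Letter.b
          = [Letter.b, Letter.b, Letter.b, Letter.b, Letter.b, Letter.b] := rfl
      rw [e]
      simp only [anStar, List.foldl_cons, List.foldl_nil]
      rw [bb n q h4 hq, bb n q h4 hq, bb n q h4 hq]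
    · have hq4 : q = 0 ∨ q = 1 ∨ q = 2 ∨ q = 3 := by omega
      rcases hq4 with rfl | rfl | rfl | rfl <;> rfl
  · intro k hk H
    have h1 := H 1 (by omega)
    have h4 := H 4 (by omega)
    rw [state1] at h1
    rw [state4 n k hn] at h4
    by_cases h3 : k % 3 = 0
    · by_cases h2 : k % 2 = 0
      · omega
      · rw [if_neg h2] at h4; omega
    · rw [if_neg h3] at h1
      by_cases h31 : k % 3 = 1 <;> simp [h31] at h1
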